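/- For nonnegative integers n and m with m > n, and for z ∈ ℂ with Im(z) ≠ 0, define Qₙ^{m}(z) := (-1)^{n+1} 2ⁿ n! (z²-1)^{m/2} d^{m-n-1}/dz^{m-n-1}[(z²-1)^{-n-1}]. Then equivalently Qₙ^{m}(z) = (1/(2^{n+1} n!)) (z²-1)^{m/2} d^{n+m}/dz^{n+m}[(z²-1)ⁿ log((z+1)/(z-1))]; i.e., the rational-function identity (-1)^{n+1} 2^{2n+1} (n!)² · d^{m-n-1}/dz^{m-n-1}[(z²-1)^{-n-1}] = d^{n+m}/dz^{n+m}[(z²-1)ⁿ log((z+1)/(z-1))] holds for m > n ≥ 0. -/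

import Mathlib

open Complex

namespace Stmt17Aux

def U : Set ℂ := {z | ¬(z.im = 0 ∧ z.re ≤ 1)}

lemma isOpen_U : IsOpen U := by
  have : U = ({z : ℂ | z.im = 0} ∩ {z : ℂ | z.re ≤ 1})ᶜ := by
    ext z; simp [U, Set.mem_setOf_eq]
  rw [this]
  exact ((isClosed_eq Complex.continuous_im continuous_const).inter
    (isClosed_le Complex.continuous_re continuous_const)).isOpen_compl

variable {z : ℂ}

lemma sub_one_ne (hz : z ∈ U) : z - 1 ≠ 0 := by
  intro h0
  have : z = 1 := by linear_combination h0
  subst this; exact hz (by norm_num)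

lemma add_one_ne (hz : z ∈ U) : z + 1 ≠ 0 := by
  intro h0
  have : z = -1 := by linear_combination h0
  subst this; exact hz (by norm_num)

lemma sq_sub_one_ne (hz : z ∈ U) : z ^ 2 - 1 ≠ 0 := by
  intro h0
  have : (z - 1) * (z + 1) = 0 := by linear_combination h0
  rcases mul_eq_zero.mp this with h | h
  · exact sub_one_ne hz h
  · exact add_one_ne hz h

lemma slit (hz : z ∈ U) : (z + 1) / (z - 1) ∈ slitPlane := by
  rw [Complex.mem_slitPlane_iff]
  by_contra hcon
  push_neg at hcon
  obtain ⟨h1, h2⟩ := hcon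
  set w := (z + 1) / (z - 1) with hwdef
  have hzne := sub_one_ne hz
  have hw : z + 1 = w * (z - 1) := by
    rw [hwdef]; field_simp
  have him : z.im = w.re * z.im := by
    have := congrArg Complex.im hw
    simpa [Complex.mul_im, Complex.add_im, Complex.sub_im, h2] using this
  by_cases hzi : z.im = 0
  · have hre : 1 < z.re := by
      by_contra hre
      exact hz ⟨hzi, by linarith⟩
    have hrep : z.re + 1 = w.re * (z.re - 1) := by
      have := congrArg Complex.re hw
      simpa [Complex.mul_re, Complex.add_re, Complex.sub_re, h2, hzi] using this
    nlinarith
  · have : w.re = 1 := by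
      have h0 : (1 - w.re) * z.im = 0 := by linear_combination him
      rcases mul_eq_zero.mp h0 with h | h
      · linarith
      · exact absurd h hzi
    linarith


lemma analytic_f (n : ℕ) :
    AnalyticOnNhd ℂ (fun w : ℂ => (w ^ 2 - 1) ^ n * Complex.log ((w + 1) / (w - 1))) U := by
  intro z hz
  have hq : AnalyticAt ℂ (fun w : ℂ => (w + 1) / (w - 1)) z :=
    ((analyticAt_id).add analyticAt_const).div ((analyticAt_id).sub analyticAt_const)
      (sub_one_ne hz)
  exact ((((analyticAt_id).pow 2).sub analyticAt_const).pow n).mul (hq.clog (slit hz))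

lemma analytic_iter {u : ℂ → ℂ} (hu : AnalyticOnNhd ℂ u U) (k : ℕ) :
    AnalyticOnNhd ℂ (iteratedDeriv k u) U := by
  rw [iteratedDeriv_eq_iterate]
  exact hu.iterated_deriv k

lemma deriv_congr_on {f g : ℂ → ℂ} (hfg : ∀ x ∈ U, f x = g x) {z : ℂ} (hz : z ∈ U) :
    deriv f z = deriv g z :=
  Filter.EventuallyEq.deriv_eq (Filter.eventuallyEq_of_mem (isOpen_U.mem_nhds hz) hfg)

lemma hasDerivAt_iter {u : ℂ → ℂ} (hu : AnalyticOnNhd ℂ u U) (i : ℕ) {z : ℂ} (hz : z ∈ U) :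
    HasDerivAt (iteratedDeriv i u) (iteratedDeriv (i + 1) u z) z := by
  rw [iteratedDeriv_succ]
  exact ((analytic_iter hu i z hz).differentiableAt).hasDerivAt

lemma hasDerivAt_quad (z : ℂ) : HasDerivAt (fun w : ℂ => w ^ 2 - 1) (2 * z) z := by
  simpa using (hasDerivAt_pow 2 z).sub_const 1

/-- generic derivative of the canonical three-term shape -/
lemma Gder {u : ℂ → ℂ} (hu : AnalyticOnNhd ℂ u U) (b c : ℂ) (i j k : ℕ) {z : ℂ}
    (hz : z ∈ U) :
    deriv (fun x : ℂ => (x ^ 2 - 1) * iteratedDeriv i u x + b * x * iteratedDeriv j u x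
      + c * iteratedDeriv k u x) z
    = ((z ^ 2 - 1) * iteratedDeriv (i + 1) u z + 2 * z * iteratedDeriv i u z)
      + (b * iteratedDeriv j u z + b * z * iteratedDeriv (j + 1) u z)
      + c * iteratedDeriv (k + 1) u z := by
  have h1 : HasDerivAt (fun x : ℂ => (x ^ 2 - 1) * iteratedDeriv i u x)
      (2 * z * iteratedDeriv i u z + (z ^ 2 - 1) * iteratedDeriv (i + 1) u z) z :=
    (hasDerivAt_quad z).mul (hasDerivAt_iter hu i hz)
  have h2 : HasDerivAt (fun x : ℂ => b * x * iteratedDeriv j u x)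
      (b * iteratedDeriv j u z + b * z * iteratedDeriv (j + 1) u z) z := by
    have hb : HasDerivAt (fun x : ℂ => b * x) b z := by
      simpa using (hasDerivAt_id z).const_mul b
    exact hb.mul (hasDerivAt_iter hu j hz)
  have h3 : HasDerivAt (fun x : ℂ => c * iteratedDeriv k u x)
      (c * iteratedDeriv (k + 1) u z) z :=
    (hasDerivAt_iter hu k hz).const_mul c
  have := ((h1.add h2).add h3).deriv
  exact this.trans (by ring)

lemma leibniz2 {u : ℂ → ℂ} (hu : AnalyticOnNhd ℂ u U) (k : ℕ) :
    ∀ z ∈ U, iteratedDeriv (k + 2) (fun w : ℂ => (w ^ 2 - 1) * u w) z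
      = (z ^ 2 - 1) * iteratedDeriv (k + 2) u z
        + (2 * (k : ℂ) + 4) * z * iteratedDeriv (k + 1) u z
        + ((k : ℂ) + 2) * ((k : ℂ) + 1) * iteratedDeriv k u z := by
  induction k with
  | zero =>
    intro z hz
    rw [iteratedDeriv_succ, iteratedDeriv_one]
    have step1 : ∀ x ∈ U, deriv (fun w : ℂ => (w ^ 2 - 1) * u w) x
        = (x ^ 2 - 1) * iteratedDeriv 1 u x + 2 * x * iteratedDeriv 0 u x
          + 0 * iteratedDeriv 0 u x := by
      intro x hx
      have hd : HasDerivAt (fun w : ℂ => (w ^ 2 - 1) * u w)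
          (2 * x * u x + (x ^ 2 - 1) * deriv u x) x :=
        (hasDerivAt_quad x).mul ((hu x hx).differentiableAt).hasDerivAt
      rw [hd.deriv, iteratedDeriv_one, iteratedDeriv_zero]; ring
    rw [deriv_congr_on step1 hz, Gder hu 2 0 1 0 0 hz]
    norm_num
    ring
  | succ k ih =>
    intro z hz
    have hre : k + 1 + 2 = (k + 2) + 1 := by ring
    rw [hre, iteratedDeriv_succ, deriv_congr_on ih hz,
      Gder hu (2 * (k : ℂ) + 4) (((k : ℂ) + 2) * ((k : ℂ) + 1)) (k + 2) (k + 1) k hz]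
    push_cast
    ring


lemma hasDerivAt_zpow_quad (e : ℤ) {z : ℂ} (hz : z ∈ U) :
    HasDerivAt (fun w : ℂ => (w ^ 2 - 1) ^ e)
      ((e : ℂ) * (z ^ 2 - 1) ^ (e - 1) * (2 * z)) z := by
  exact HasDerivAt.comp z
    (hasDerivAt_zpow e _ (Or.inl (sq_sub_one_ne hz))) (hasDerivAt_quad z)

lemma main_ind (n : ℕ) : ∀ z ∈ U,
    iteratedDeriv (2 * n + 1)
      (fun w : ℂ => (w ^ 2 - 1) ^ n * Complex.log ((w + 1) / (w - 1))) z
    = (-1 : ℂ) ^ (n + 1) * 2 ^ (2 * n + 1) * (n.factorial : ℂ) ^ 2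
        * (z ^ 2 - 1) ^ (-(n : ℤ) - 1) := by
  induction n with
  | zero =>
    intro z hz
    simp only [pow_zero, one_mul, Nat.factorial_zero, Nat.cast_one, mul_zero, zero_add,
      iteratedDeriv_one, Nat.cast_zero, neg_zero, zero_sub]
    have ha : HasDerivAt (fun w : ℂ => w + 1) 1 z := (hasDerivAt_id z).add_const 1
    have hb : HasDerivAt (fun w : ℂ => w - 1) 1 z := (hasDerivAt_id z).sub_const 1
    have hdiv : HasDerivAt (fun w : ℂ => (w + 1) / (w - 1))
        ((1 * (z - 1) - (z + 1) * 1) / (z - 1) ^ 2) z := ha.div hb (sub_one_ne hz)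
    have hlog := hdiv.clog (slit hz)
    rw [hlog.deriv]
    have h1 := sub_one_ne hz
    have h2 := add_one_ne hz
    have h3 := sq_sub_one_ne hz
    rw [zpow_neg, zpow_one]
    field_simp
    ring
  | succ n ih =>
    intro z hz
    set c : ℂ := (-1 : ℂ) ^ (n + 1) * 2 ^ (2 * n + 1) * (n.factorial : ℂ) ^ 2 with hc
    have hfun : (fun w : ℂ => (w ^ 2 - 1) ^ (n + 1) * Complex.log ((w + 1) / (w - 1)))
        = fun w : ℂ => (w ^ 2 - 1) *
            ((w ^ 2 - 1) ^ n * Complex.log ((w + 1) / (w - 1))) := by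
      funext w; ring
    rw [hfun, show 2 * (n + 1) + 1 = (2 * n + 1) + 2 from by ring,
      leibniz2 (analytic_f n) (2 * n + 1) z hz]
    set f : ℂ → ℂ := fun w : ℂ => (w ^ 2 - 1) ^ n * Complex.log ((w + 1) / (w - 1)) with hf
    -- first derivative level (IH)
    have hD1 : ∀ x ∈ U, iteratedDeriv (2 * n + 1) f x
        = c * (x ^ 2 - 1) ^ (-(n : ℤ) - 1) := fun x hx => ih x hx
    -- second derivative level
    set K : ℂ := c * (-(n : ℂ) - 1) * 2 with hK
    have hD2 : ∀ x ∈ U, iteratedDeriv (2 * n + 2) f x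
        = K * (x * (x ^ 2 - 1) ^ (-(n : ℤ) - 2)) := by
      intro x hx
      rw [show 2 * n + 2 = (2 * n + 1) + 1 from rfl, iteratedDeriv_succ,
        deriv_congr_on hD1 hx]
      rw [deriv_const_mul_field]
      have hg := hasDerivAt_zpow_quad (-(n : ℤ) - 1) hx
      rw [hg.deriv, show -(n : ℤ) - 1 - 1 = -(n : ℤ) - 2 from by ring]
      push_cast
      ring
    -- third derivative level (only at z)
    have hD3 : iteratedDeriv (2 * n + 3) f z
        = K * ((z ^ 2 - 1) ^ (-(n : ℤ) - 2)
            + z * ((-(n : ℂ) - 2) * (z ^ 2 - 1) ^ (-(n : ℤ) - 3) * (2 * z))) := by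
      rw [show 2 * n + 3 = (2 * n + 2) + 1 from rfl, iteratedDeriv_succ,
        deriv_congr_on hD2 hz, deriv_const_mul_field]
      have hg := hasDerivAt_zpow_quad (-(n : ℤ) - 2) hz
      have hh : HasDerivAt (fun w : ℂ => w * (w ^ 2 - 1) ^ (-(n : ℤ) - 2))
          (1 * (z ^ 2 - 1) ^ (-(n : ℤ) - 2)
            + z * (((-(n : ℤ) - 2 : ℤ) : ℂ) * (z ^ 2 - 1) ^ (-(n : ℤ) - 2 - 1) * (2 * z))) z :=
        (hasDerivAt_id z).mul hg
      rw [hh.deriv, show -(n : ℤ) - 2 - 1 = -(n : ℤ) - 3 from by ring]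
      push_cast
      ring
    rw [hD1 z hz, hD2 z hz, hD3]
    -- express everything over (z^2-1)^(-(n:ℤ)-3)
    have ht := sq_sub_one_ne hz
    have hA : (z ^ 2 - 1) ^ (-(n : ℤ) - 1)
        = (z ^ 2 - 1) ^ (-(n : ℤ) - 2) * (z ^ 2 - 1) := by
      rw [show -(n : ℤ) - 1 = (-(n : ℤ) - 2) + 1 from by ring, zpow_add_one₀ ht]
    have hB : (z ^ 2 - 1) ^ (-(n : ℤ) - 2)
        = (z ^ 2 - 1) ^ (-(n : ℤ) - 3) * (z ^ 2 - 1) := by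
      rw [show -(n : ℤ) - 2 = (-(n : ℤ) - 3) + 1 from by ring, zpow_add_one₀ ht]
    have hT : (z ^ 2 - 1) ^ (-((n : ℕ) + 1 : ℕ) - 1 : ℤ)
        = (z ^ 2 - 1) ^ (-(n : ℤ) - 3) * (z ^ 2 - 1) := by
      rw [show (-((n : ℕ) + 1 : ℕ) - 1 : ℤ) = -(n : ℤ) - 2 from by push_cast; ring]
      exact hB
    rw [hA, hB, hT, hK, hc]
    rw [Nat.factorial_succ]
    push_cast
    ring


lemma ext_ind (n : ℕ) : ∀ k : ℕ, ∀ z ∈ U,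
    iteratedDeriv (2 * n + 1 + k)
      (fun w : ℂ => (w ^ 2 - 1) ^ n * Complex.log ((w + 1) / (w - 1))) z
    = (-1 : ℂ) ^ (n + 1) * 2 ^ (2 * n + 1) * (n.factorial : ℂ) ^ 2
        * iteratedDeriv k (fun w : ℂ => (w ^ 2 - 1) ^ (-(n : ℤ) - 1)) z := by
  intro k
  induction k with
  | zero =>
    intro z hz
    simpa using main_ind n z hz
  | succ k ih =>
    intro z hz
    rw [show 2 * n + 1 + (k + 1) = (2 * n + 1 + k) + 1 from rfl, iteratedDeriv_succ,
      deriv_congr_on ih hz, deriv_const_mul_field, iteratedDeriv_succ]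

end Stmt17Aux

theorem stmt_17 (n m : ℕ) (h : n < m) (z : ℂ) (hz : ¬(z.im = 0 ∧ z.re ≤ 1)) :
    (-1 : ℂ) ^ (n + 1) * 2 ^ (2 * n + 1) * (n.factorial : ℂ) ^ 2 *
        iteratedDeriv (m - n - 1) (fun w : ℂ => (w ^ 2 - 1) ^ (-(n : ℤ) - 1)) z =
      iteratedDeriv (n + m)
        (fun w : ℂ => (w ^ 2 - 1) ^ n * Complex.log ((w + 1) / (w - 1))) z := by
  rw [show n + m = 2 * n + 1 + (m - n - 1) from by omega]
  exact (Stmt17Aux.ext_ind n (m - n - 1) z hz).symm
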